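/- arXiv:2505.10525 — 3 statements merged into one kernel-verified Lean document; each statement's English description precedes it below -/
import Mathlib

section
/- Let E_s = {m^{-s} : m ∈ ℕ, m ≥ 1} ∪ {0} ⊂ ℝ for s > 0. Then the Assouad dimension of E_s equals 1. -/
/-- `s` is an Assouad-dimension exponent bound for the metric space `X`:
there is `C > 0` such that every ball `B(x,R)` can be covered by at most
`C (R/r)^s` balls of radius `r`, for all `0 < r < R`. -/
def IsAssouadExponent (X : Type*) [MetricSpace X] (s : ℝ) : Prop :=
  ∃ C : ℝ, 0 < C ∧ ∀ (x : X) (R r : ℝ), 0 < r → r < R →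
    ∃ t : Finset X, (Metric.closedBall x R ⊆ ⋃ y ∈ t, Metric.closedBall y r) ∧
      (t.card : ℝ) ≤ C * (R / r) ^ s

/-- The Assouad dimension of a metric space. -/
noncomputable def assouadDim (X : Type*) [MetricSpace X] : ℝ :=
  sInf {s : ℝ | 0 < s ∧ IsAssouadExponent X s}

/-- The polynomially decaying sequence set `E_s = {m^{-s}} ∪ {0}`. -/
noncomputable def Eset (s : ℝ) : Set ℝ :=
  {x : ℝ | ∃ m : ℕ, 1 ≤ m ∧ x = (m : ℝ) ^ (-s)} ∪ {0}

open Metric Set in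
lemma exponent_one (X : Set ℝ) : IsAssouadExponent X 1 := by
  classical
  refine ⟨3, by norm_num, fun x R r hr hrR => ?_⟩
  have hR : 0 < R := hr.trans hrR
  set a : ℕ → ℝ := fun i => (x : ℝ) - R + i * r with ha
  set f : ℕ → X := fun i =>
    if h : ∃ y : X, (y : ℝ) ∈ Set.Icc (a i) (a i + r) then h.choose else x with hf
  set N : ℕ := ⌊2 * R / r⌋₊ + 1 with hN
  refine ⟨(Finset.range N).image f, ?_, ?_⟩
  · intro z hz
    have hz' : |(z : ℝ) - (x : ℝ)| ≤ R := by
      have := mem_closedBall.1 hz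
      rwa [Subtype.dist_eq, Real.dist_eq] at this
    have h1 : (x : ℝ) - R ≤ (z : ℝ) := by
      have := abs_le.1 hz'; linarith [this.1]
    have h2 : (z : ℝ) ≤ (x : ℝ) + R := by
      have := abs_le.1 hz'; linarith [this.2]
    set i : ℕ := ⌊((z : ℝ) - ((x : ℝ) - R)) / r⌋₊ with hi
    have hnn : 0 ≤ ((z : ℝ) - ((x : ℝ) - R)) / r := div_nonneg (by linarith) hr.le
    have hiN : i < N := by
      have : ((z : ℝ) - ((x : ℝ) - R)) / r ≤ 2 * R / r := by
        apply div_le_div_of_nonneg_right ?_ hr.le; linarith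
      have := Nat.floor_le_floor this
      omega
    have hlow : a i ≤ (z : ℝ) := by
      have := Nat.floor_le hnn
      have h3 : (i : ℝ) * r ≤ (z : ℝ) - ((x : ℝ) - R) := by
        rw [← le_div_iff₀ hr]; exact this
      simp only [ha]; linarith
    have hhigh : (z : ℝ) ≤ a i + r := by
      have := Nat.lt_floor_add_one (((z : ℝ) - ((x : ℝ) - R)) / r)
      have h3 : (z : ℝ) - ((x : ℝ) - R) < ((i : ℝ) + 1) * r := by
        rw [← div_lt_iff₀ hr]; exact this
      simp only [ha]; nlinarith
    have hex : ∃ y : X, (y : ℝ) ∈ Set.Icc (a i) (a i + r) := ⟨z, hlow, hhigh⟩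
    have hfi : ((f i : ℝ)) ∈ Set.Icc (a i) (a i + r) := by
      simp only [hf, dif_pos hex]; exact hex.choose_spec
    refine Set.mem_biUnion (Finset.mem_image.2 ⟨i, Finset.mem_range.2 hiN, rfl⟩) ?_
    rw [mem_closedBall, Subtype.dist_eq, Real.dist_eq, abs_le]
    constructor <;> [linarith [hfi.2]; linarith [hfi.1]]
  · calc ((Finset.image f (Finset.range N)).card : ℝ)
        ≤ ((Finset.range N).card : ℝ) := by exact_mod_cast Finset.card_image_le
      _ = (N : ℝ) := by rw [Finset.card_range]
      _ ≤ 2 * R / r + 1 := by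
          have := Nat.floor_le (show (0:ℝ) ≤ 2 * R / r by positivity)
          push_cast [hN]; linarith
      _ ≤ 3 * (R / r) ^ (1 : ℝ) := by
          rw [Real.rpow_one]
          have h1 : 1 ≤ R / r := le_of_lt ((one_lt_div hr).2 hrR)
          have : 2 * R / r = 2 * (R / r) := by ring
          linarith [this ▸ le_refl (2 * R / r)]

open Set in
lemma gap_lemma (s : ℝ) (hs : 0 < s) (k : ℝ) (hk : 1 ≤ k) :
    s * (k + 1) ^ (-(s + 1)) ≤ k ^ (-s) - (k + 1) ^ (-s) := by
  have hk0 : 0 < k := by linarith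
  have hcont : ContinuousOn (fun x : ℝ => x ^ (-s)) (Icc k (k + 1)) := by
    apply ContinuousOn.rpow_const continuousOn_id
    intro x hx
    exact Or.inl (by simp; nlinarith [hx.1])
  have hderiv : ∀ x ∈ Ioo k (k + 1),
      HasDerivAt (fun x : ℝ => x ^ (-s)) ((-s) * x ^ (-s - 1)) x := by
    intro x hx
    exact Real.hasDerivAt_rpow_const (Or.inl (by nlinarith [hx.1]))
  obtain ⟨c, hc, hceq⟩ := exists_hasDerivAt_eq_slope (fun x : ℝ => x ^ (-s))
    (fun x => (-s) * x ^ (-s - 1)) (by linarith : k < k + 1) hcont hderiv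
  have hc0 : 0 < c := by nlinarith [hc.1]
  have hsimp : (k + 1) - k = 1 := by ring
  rw [hsimp, div_one] at hceq
  have h1 : k ^ (-s) - (k + 1) ^ (-s) = s * c ^ (-s - 1) := by nlinarith [hceq]
  rw [h1]
  have h2 : (k + 1) ^ (-(s + 1)) ≤ c ^ (-s - 1) := by
    rw [show -s - 1 = -(s + 1) by ring]
    exact Real.rpow_le_rpow_of_nonpos hc0 (le_of_lt hc.2) (by linarith)
  nlinarith [h2]

open Metric Set in
set_option maxHeartbeats 1000000 in
lemma not_exponent (s : ℝ) (hs : 0 < s) (b : ℝ) (hb0 : 0 < b) (hb1 : b < 1) :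
    ¬ IsAssouadExponent (Eset s) b := by
  classical
  rintro ⟨C, hC, hcov⟩
  set K : ℝ := 3 * 3 ^ (s + 1) / s with hK
  have hK0 : 0 < K := by
    have := Real.rpow_pos_of_pos (by norm_num : (0:ℝ) < 3) (s + 1)
    positivity
  set D : ℝ := C * K ^ b with hD
  have hD0 : 0 < D := by
    have := Real.rpow_pos_of_pos hK0 b
    positivity
  obtain ⟨m, hm1, hms, hmD⟩ : ∃ m : ℕ, 1 ≤ m ∧ s ≤ (m : ℝ) ∧
      D ^ (1 / (1 - b)) + 1 ≤ (m : ℝ) := by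
    refine ⟨⌈max s (D ^ (1 / (1 - b)) + 1)⌉₊ + 1, by omega, ?_, ?_⟩
    · calc s ≤ max s (D ^ (1 / (1 - b)) + 1) := le_max_left _ _
        _ ≤ (⌈max s (D ^ (1 / (1 - b)) + 1)⌉₊ : ℝ) := Nat.le_ceil _
        _ ≤ _ := by push_cast; linarith
    · calc D ^ (1 / (1 - b)) + 1 ≤ max s (D ^ (1 / (1 - b)) + 1) := le_max_right _ _
        _ ≤ (⌈max s (D ^ (1 / (1 - b)) + 1)⌉₊ : ℝ) := Nat.le_ceil _
        _ ≤ _ := by push_cast; linarith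
  have hm1R : (1 : ℝ) ≤ (m : ℝ) := by exact_mod_cast hm1
  -- the center, radius, and small radius
  have hxmem : ((m : ℝ) ^ (-s)) ∈ Eset s := Or.inl ⟨m, hm1, rfl⟩
  set x : Eset s := ⟨(m : ℝ) ^ (-s), hxmem⟩ with hx
  set R : ℝ := (m : ℝ) ^ (-s) with hR
  have hR0 : 0 < R := Real.rpow_pos_of_pos (by linarith) _
  set W : ℝ := 2 * (m : ℝ) + 1 with hW
  have hW0 : 0 < W := by positivity
  set G : ℝ := s * W ^ (-(s + 1)) with hG
  have hZ0 : 0 < W ^ (-(s + 1)) := Real.rpow_pos_of_pos hW0 _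
  have hG0 : 0 < G := by positivity
  set r : ℝ := G / 3 with hr
  have hr0 : 0 < r := by positivity
  have hrR : r < R := by
    have h1 : W ^ (-(s + 1)) = W ^ (-s) * W ^ (-(1:ℝ)) := by
      rw [← Real.rpow_add hW0]; ring_nf
    have h2 : W ^ (-s) ≤ (m : ℝ) ^ (-s) :=
      Real.rpow_le_rpow_of_nonpos (by linarith) (by linarith) (by linarith)
    have h3 : W ^ (-(1:ℝ)) = W⁻¹ := by
      rw [Real.rpow_neg hW0.le, Real.rpow_one]
    have h4 : s * W⁻¹ < 3 := by
      rw [mul_inv_lt_iff₀ hW0]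
      nlinarith
    have h5 : G ≤ s * W⁻¹ * R := by
      rw [hG, h1, h3, hR]
      have : 0 ≤ s * W⁻¹ := by positivity
      calc s * (W ^ (-s) * W⁻¹) = s * W⁻¹ * W ^ (-s) := by ring
        _ ≤ s * W⁻¹ * (m : ℝ) ^ (-s) := by
            exact mul_le_mul_of_nonneg_left h2 this
    have : G < 3 * R := lt_of_le_of_lt h5 (by nlinarith)
    rw [hr]; linarith
  obtain ⟨t, hcover, hcard⟩ := hcov x R r hr0 hrR
  -- the separated points
  set p : ℕ → Eset s := fun k =>
    if h : 1 ≤ k then ⟨(k : ℝ) ^ (-s), Or.inl ⟨k, h, rfl⟩⟩ else x with hp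
  have hpval : ∀ k : ℕ, 1 ≤ k → ((p k : ℝ)) = (k : ℝ) ^ (-s) := by
    intro k hk; simp only [hp, dif_pos hk]
  have hmono : ∀ k j : ℕ, 1 ≤ k → k ≤ j → (j : ℝ) ^ (-s) ≤ (k : ℝ) ^ (-s) := by
    intro k j hk hkj
    exact Real.rpow_le_rpow_of_nonpos (by exact_mod_cast hk) (by exact_mod_cast hkj)
      (by linarith)
  have hmemball : ∀ k ∈ Finset.Icc m (2 * m), p k ∈ Metric.closedBall x R := by
    intro k hk
    rw [Finset.mem_Icc] at hk
    have hk1 : 1 ≤ k := le_trans hm1 hk.1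
    rw [mem_closedBall, Subtype.dist_eq, Real.dist_eq, hpval k hk1]
    have h1 : (k : ℝ) ^ (-s) ≤ (m : ℝ) ^ (-s) := hmono m k hm1 hk.1
    have h2 : 0 < (k : ℝ) ^ (-s) := Real.rpow_pos_of_pos (by exact_mod_cast hk1 : (0:ℝ) < k) _
    rw [abs_le]
    constructor <;> simp only [hx, hR] <;> [linarith; linarith]
  -- separation
  have hsep : ∀ k j : ℕ, m ≤ k → k < j → j ≤ 2 * m → G ≤ dist (p k) (p j) := by
    intro k j hmk hkj hj2m
    have hk1 : 1 ≤ k := le_trans hm1 hmk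
    have hj1 : 1 ≤ j := le_trans hk1 hkj.le
    rw [Subtype.dist_eq, Real.dist_eq, hpval k hk1, hpval j hj1]
    have hgap := gap_lemma s hs (k : ℝ) (by exact_mod_cast hk1)
    have hjk1 : (j : ℝ) ^ (-s) ≤ ((k : ℝ) + 1) ^ (-s) := by
      have : ((k + 1 : ℕ) : ℝ) ^ (-s) = ((k:ℝ) + 1) ^ (-s) := by push_cast; ring_nf
      rw [← this]
      exact hmono (k + 1) j (by omega) (by omega)
    have hWk : s * W ^ (-(s + 1)) ≤ s * ((k : ℝ) + 1) ^ (-(s + 1)) := by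
      apply mul_le_mul_of_nonneg_left _ hs.le
      apply Real.rpow_le_rpow_of_nonpos (by positivity) _ (by linarith)
      rw [hW]
      have : (k : ℝ) ≤ 2 * (m : ℝ) := by
        have : (k : ℝ) < (j : ℝ) := by exact_mod_cast hkj
        have : (j : ℝ) ≤ 2 * (m : ℝ) := by exact_mod_cast hj2m
        linarith [show (k:ℝ) + 1 ≤ (j:ℝ) by exact_mod_cast hkj]
      linarith
    have hle : (k : ℝ) ^ (-s) - (j : ℝ) ^ (-s) ≥ G := by
      rw [hG]
      calc s * W ^ (-(s+1)) ≤ s * ((k:ℝ) + 1) ^ (-(s+1)) := hWk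
        _ ≤ (k:ℝ) ^ (-s) - ((k:ℝ)+1) ^ (-s) := hgap
        _ ≤ (k:ℝ) ^ (-s) - (j:ℝ) ^ (-s) := by linarith
    exact le_trans hle (le_abs_self _)
  -- choose covering ball centers
  set F : ℕ → Eset s := fun k =>
    if h : ∃ y, y ∈ t ∧ p k ∈ Metric.closedBall y r then h.choose else x with hF
  have hFspec : ∀ k ∈ Finset.Icc m (2 * m), F k ∈ t ∧ dist (p k) (F k) ≤ r := by
    intro k hk
    have := hcover (hmemball k hk)
    rw [Set.mem_iUnion₂] at this
    obtain ⟨y, hy, hmem⟩ := this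
    have hex : ∃ y, y ∈ t ∧ p k ∈ Metric.closedBall y r := ⟨y, hy, hmem⟩
    simp only [hF, dif_pos hex]
    exact ⟨hex.choose_spec.1, mem_closedBall.1 hex.choose_spec.2⟩
  have haux : ∀ k ∈ Finset.Icc m (2 * m), ∀ j ∈ Finset.Icc m (2 * m),
      k < j → F k ≠ F j := by
    intro k hk j hj hkj heq
    rw [Finset.mem_Icc] at hk hj
    have h1 := (hFspec k (Finset.mem_Icc.2 hk)).2
    have h2 := (hFspec j (Finset.mem_Icc.2 hj)).2
    have hd : dist (p k) (p j) ≤ 2 * r := by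
      rw [heq] at h1
      calc dist (p k) (p j) ≤ dist (p k) (F j) + dist (F j) (p j) := dist_triangle _ _ _
        _ ≤ r + r := add_le_add h1 (by rw [dist_comm]; exact h2)
        _ = 2 * r := by ring
    have hG := hsep k j hk.1 hkj hj.2
    rw [hr] at hd
    linarith
  have hinj : Set.InjOn F (Finset.Icc m (2 * m)) := by
    intro k hk j hj heq
    by_contra hne
    rcases lt_or_gt_of_ne hne with h | h
    · exact haux k hk j hj h heq
    · exact haux j hj k hk h heq.symm
  have hcardle : (Finset.Icc m (2 * m)).card ≤ t.card := by
    apply Finset.card_le_card_of_injOn F (fun k hk => (hFspec k hk).1) hinj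
  have hIcc : (Finset.Icc m (2 * m)).card = m + 1 := by
    rw [Nat.card_Icc]; omega
  have hm1card : ((m : ℝ) + 1) ≤ (t.card : ℝ) := by
    rw [hIcc] at hcardle; exact_mod_cast hcardle
  -- bound R / r
  have hWinv : W ^ (-(s + 1)) = (W ^ (s + 1))⁻¹ := by
    rw [← Real.rpow_neg hW0.le]
  have hRr : R / r ≤ K * (m : ℝ) := by
    have hW31 : W ≤ 3 * (m : ℝ) := by rw [hW]; linarith
    have hWp : W ^ (s + 1) ≤ (3 * (m : ℝ)) ^ (s + 1) :=
      Real.rpow_le_rpow hW0.le hW31 (by linarith)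
    have h3m : (3 * (m : ℝ)) ^ (s + 1) = 3 ^ (s + 1) * (m : ℝ) ^ (s + 1) :=
      Real.mul_rpow (by norm_num) (by linarith)
    have hmm : (m : ℝ) ^ (-s) * (m : ℝ) ^ (s + 1) = (m : ℝ) := by
      rw [← Real.rpow_add (by linarith : (0:ℝ) < (m:ℝ))]
      norm_num
    have hWp0 : (0:ℝ) < W ^ (s + 1) := Real.rpow_pos_of_pos hW0 _
    have hrval : R / r = 3 / s * ((m : ℝ) ^ (-s) * W ^ (s + 1)) := by
      have h2 : W ^ (s + 1) ≠ 0 := ne_of_gt hWp0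
      rw [hr, hG, hR, hWinv]
      field_simp
    rw [hrval, hK]
    have hmp : 0 ≤ (m : ℝ) ^ (-s) := le_of_lt (Real.rpow_pos_of_pos (by linarith) _)
    have : (m : ℝ) ^ (-s) * W ^ (s + 1) ≤ 3 ^ (s + 1) * (m : ℝ) := by
      calc (m : ℝ) ^ (-s) * W ^ (s + 1) ≤ (m : ℝ) ^ (-s) * (3 ^ (s+1) * (m:ℝ) ^ (s+1)) := by
            rw [← h3m]; exact mul_le_mul_of_nonneg_left hWp hmp
        _ = 3 ^ (s + 1) * ((m : ℝ) ^ (-s) * (m : ℝ) ^ (s + 1)) := by ring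
        _ = 3 ^ (s + 1) * (m : ℝ) := by rw [hmm]
    calc 3 / s * ((m : ℝ) ^ (-s) * W ^ (s + 1)) ≤ 3 / s * (3 ^ (s + 1) * (m : ℝ)) := by
          apply mul_le_mul_of_nonneg_left this (by positivity)
      _ = 3 * 3 ^ (s + 1) / s * (m : ℝ) := by ring
  -- final contradiction
  have hRr0 : 0 ≤ R / r := by positivity
  have hpow : (R / r) ^ b ≤ K ^ b * (m : ℝ) ^ b := by
    calc (R / r) ^ b ≤ (K * (m : ℝ)) ^ b := Real.rpow_le_rpow hRr0 hRr hb0.le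
      _ = K ^ b * (m : ℝ) ^ b := Real.mul_rpow hK0.le (by linarith)
  have hfin : ((m : ℝ) + 1) ≤ D * (m : ℝ) ^ b := by
    calc ((m : ℝ) + 1) ≤ (t.card : ℝ) := hm1card
      _ ≤ C * (R / r) ^ b := hcard
      _ ≤ C * (K ^ b * (m : ℝ) ^ b) := mul_le_mul_of_nonneg_left hpow hC.le
      _ = D * (m : ℝ) ^ b := by rw [hD]; ring
  -- but m^{1-b} > D
  have hb1' : 0 < 1 - b := by linarith
  have hDm : D < (m : ℝ) ^ (1 - b) := by
    have h1 : D ^ (1 / (1 - b)) < (m : ℝ) := by linarith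
    have h2 : (D ^ (1 / (1 - b))) ^ (1 - b) < (m : ℝ) ^ (1 - b) :=
      Real.rpow_lt_rpow (le_of_lt (Real.rpow_pos_of_pos hD0 _)) h1 hb1'
    rwa [← Real.rpow_mul hD0.le, one_div_mul_cancel (by linarith : (1:ℝ) - b ≠ 0),
      Real.rpow_one] at h2
  have hmb0 : 0 < (m : ℝ) ^ b := Real.rpow_pos_of_pos (by linarith) _
  have hlast : D * (m : ℝ) ^ b < (m : ℝ) := by
    have := mul_lt_mul_of_pos_right hDm hmb0
    rwa [← Real.rpow_add (by linarith : (0:ℝ) < (m:ℝ)),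
      show 1 - b + b = 1 by ring, Real.rpow_one] at this
  linarith

/-- The Assouad dimension of `E_s` equals `1`, for any `s > 0`. -/
theorem stmt_5 (s : ℝ) (hs : 0 < s) : assouadDim (Eset s) = 1 := by
  have hub : IsAssouadExponent (Eset s) 1 := exponent_one _
  unfold assouadDim
  apply le_antisymm
  · have hmem : (1 : ℝ) ∈ {s' : ℝ | 0 < s' ∧ IsAssouadExponent (Eset s) s'} :=
      ⟨one_pos, hub⟩
    have hbdd : BddBelow {s' : ℝ | 0 < s' ∧ IsAssouadExponent (Eset s) s'} :=
      ⟨0, fun y hy => le_of_lt hy.1⟩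
    exact csInf_le hbdd hmem
  · have hne : Set.Nonempty {s' : ℝ | 0 < s' ∧ IsAssouadExponent (Eset s) s'} :=
      ⟨1, one_pos, hub⟩
    apply le_csInf hne
    rintro c ⟨hc0, hc⟩
    by_contra h
    push_neg at h
    exact not_exponent s hs c hc0 h hc
end

section
/- Let B^n be the closed unit ball in ℝ^n. For y ∈ B^n, a > 0, m ∈ {1,…,n}, 0 < s ≤ m, 0 < θ ≤ 1, and 0 < r < 1, define the kernel φ(u) = min{1, (r/u)^s, r^{θ(m-s)+s}/u^m}. Then ∫_{B^n} φ(|ax - y|) dx ≤ ∫_{B^n} φ(|ax|) dx, where integration is with respect to Lebesgue measure. -/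
open MeasureTheory Pointwise Filter

/-- The kernel `φ_{r,θ}^{s,m}(u) = min{1, (r/u)^s, r^{θ(m-s)+s}/u^m}`, with `φ(u) = 1`
for `u ≤ 0`. -/
noncomputable def phiKernel (r θ s : ℝ) (m : ℕ) (u : ℝ) : ℝ :=
  if u ≤ 0 then 1
  else min 1 (min ((r / u) ^ s) (r ^ (θ * (m - s) + s) / u ^ m))

lemma phiKernel_nonneg {r θ s : ℝ} {m : ℕ} (hr : 0 < r) (u : ℝ) :
    0 ≤ phiKernel r θ s m u := by
  unfold phiKernel
  split_ifs with h
  · norm_num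
  · push_neg at h
    have h1 : (0:ℝ) ≤ (r / u) ^ s := Real.rpow_nonneg (by positivity) s
    have h2 : (0:ℝ) ≤ r ^ (θ * (m - s) + s) / u ^ m := by positivity
    simp [le_min_iff, h1, h2]

lemma phiKernel_le_one {r θ s : ℝ} {m : ℕ} (u : ℝ) :
    phiKernel r θ s m u ≤ 1 := by
  unfold phiKernel
  split_ifs with h
  · exact le_refl 1
  · exact min_le_left _ _

lemma phiKernel_anti {r θ s : ℝ} {m : ℕ} (hr : 0 < r) (hs : 0 < s)
    {u v : ℝ} (hu : 0 ≤ u) (huv : u ≤ v) :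
    phiKernel r θ s m v ≤ phiKernel r θ s m u := by
  rcases eq_or_lt_of_le hu with h0 | h0
  · -- u = 0, φ u = 1
    unfold phiKernel
    rw [if_pos (le_of_eq h0.symm)]
    split_ifs with h
    · exact le_refl 1
    · exact min_le_left _ _
  · have hv : 0 < v := lt_of_lt_of_le h0 huv
    unfold phiKernel
    rw [if_neg (not_le.mpr h0), if_neg (not_le.mpr hv)]
    apply min_le_min le_rfl
    apply min_le_min
    · exact Real.rpow_le_rpow (by positivity)
        (div_le_div_of_nonneg_left hr.le h0 huv) hs.le
    · apply div_le_div_of_nonneg_left (by positivity) (by positivity)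
      exact pow_le_pow_left₀ hu huv m

lemma phiKernel_measurable (r θ s : ℝ) (m : ℕ) :
    Measurable (phiKernel r θ s m) := by
  unfold phiKernel
  apply Measurable.ite (measurableSet_Iic (a := (0:ℝ))) measurable_const
  apply Measurable.min measurable_const
  apply Measurable.min
  · fun_prop
  · fun_prop

/-- Shifting a norm-down-closed set away from the origin decreases the measure of its
intersection with the unit ball. -/
lemma vadd_inter_ball_le {n : ℕ} (K : Set (EuclideanSpace ℝ (Fin n)))
    (hK : ∀ x ∈ K, ∀ x' : EuclideanSpace ℝ (Fin n), ‖x'‖ ≤ ‖x‖ → x' ∈ K)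
    (c : EuclideanSpace ℝ (Fin n)) :
    volume ((c +ᵥ K) ∩ Metric.closedBall 0 1) ≤ volume (K ∩ Metric.closedBall 0 1) := by
  by_cases h : ∀ x ∈ K, ‖x‖ ≤ 1
  · have hKB : K ∩ Metric.closedBall 0 1 = K := by
      apply Set.inter_eq_left.mpr
      intro x hx
      simpa [mem_closedBall_zero_iff] using h x hx
    rw [hKB]
    calc volume ((c +ᵥ K) ∩ Metric.closedBall 0 1) ≤ volume (c +ᵥ K) :=
          measure_mono Set.inter_subset_left
      _ = volume K := measure_vadd volume c K
  · push_neg at h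
    obtain ⟨x, hxK, hx1⟩ := h
    have hBK : K ∩ Metric.closedBall 0 1 = Metric.closedBall 0 1 := by
      apply Set.inter_eq_right.mpr
      intro b hb
      exact hK x hxK b (le_trans (mem_closedBall_zero_iff.mp hb) hx1.le)
    rw [hBK]
    exact measure_mono Set.inter_subset_right

/-- Symmetrisation lemma: for `y` in the closed unit ball `B^n`, `a > 0`,
`1 ≤ m ≤ n`, `0 < s ≤ m`, `0 < θ ≤ 1`, and `0 < r < 1`,
`∫_{B^n} φ(|ax - y|) dx ≤ ∫_{B^n} φ(|ax|) dx`. -/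
theorem stmt_8 (n m : ℕ) (hm1 : 1 ≤ m) (hmn : m ≤ n) (s θ r a : ℝ)
    (hs0 : 0 < s) (hsm : s ≤ m) (hθ0 : 0 < θ) (hθ1 : θ ≤ 1)
    (hr0 : 0 < r) (hr1 : r < 1) (ha : 0 < a)
    (y : EuclideanSpace ℝ (Fin n)) (hy : y ∈ Metric.closedBall (0 : EuclideanSpace ℝ (Fin n)) 1) :
    ∫ x in Metric.closedBall (0 : EuclideanSpace ℝ (Fin n)) 1,
        phiKernel r θ s m ‖a • x - y‖ ≤
      ∫ x in Metric.closedBall (0 : EuclideanSpace ℝ (Fin n)) 1,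
        phiKernel r θ s m ‖a • x‖ := by
  set B : Set (EuclideanSpace ℝ (Fin n)) := Metric.closedBall 0 1 with hB
  set f : EuclideanSpace ℝ (Fin n) → ℝ := fun x => phiKernel r θ s m ‖a • x - y‖ with hf
  set g : EuclideanSpace ℝ (Fin n) → ℝ := fun x => phiKernel r θ s m ‖a • x‖ with hg
  have hfm : Measurable f := by
    apply (phiKernel_measurable r θ s m).comp
    exact ((continuous_const_smul a).sub continuous_const).norm.measurable
  have hgm : Measurable g := by
    apply (phiKernel_measurable r θ s m).comp
    exact (continuous_const_smul a).norm.measurable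
  have hμB : volume B ≠ ⊤ := (measure_closedBall_lt_top).ne
  rw [integral_eq_lintegral_of_nonneg_ae
      (Eventually.of_forall fun x => phiKernel_nonneg hr0 _) hfm.aestronglyMeasurable,
    integral_eq_lintegral_of_nonneg_ae
      (Eventually.of_forall fun x => phiKernel_nonneg hr0 _) hgm.aestronglyMeasurable]
  have hgfin : ∫⁻ x in B, ENNReal.ofReal (g x) ∂volume ≠ ⊤ := by
    apply ne_of_lt
    calc ∫⁻ x in B, ENNReal.ofReal (g x) ∂volume ≤ ∫⁻ _x in B, 1 ∂volume := by
          apply lintegral_mono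
          intro x
          exact ENNReal.ofReal_le_one.mpr (phiKernel_le_one _)
      _ = volume B := by simp
      _ < ⊤ := lt_top_iff_ne_top.mpr hμB
  apply ENNReal.toReal_mono hgfin
  rw [lintegral_eq_lintegral_meas_lt _
      (Eventually.of_forall fun x => phiKernel_nonneg hr0 _) hfm.aemeasurable,
    lintegral_eq_lintegral_meas_lt _
      (Eventually.of_forall fun x => phiKernel_nonneg hr0 _) hgm.aemeasurable]
  apply lintegral_mono
  intro t
  simp only []
  rw [Measure.restrict_apply' measurableSet_closedBall,
    Measure.restrict_apply' measurableSet_closedBall]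
  set K : Set (EuclideanSpace ℝ (Fin n)) := {x | t < g x} with hK
  have hKdown : ∀ x ∈ K, ∀ x' : EuclideanSpace ℝ (Fin n), ‖x'‖ ≤ ‖x‖ → x' ∈ K := by
    intro x hx x' hxx'
    have h1 : ‖a • x'‖ ≤ ‖a • x‖ := by
      rw [norm_smul, norm_smul]
      exact mul_le_mul_of_nonneg_left hxx' (norm_nonneg _)
    have h2 : phiKernel r θ s m ‖a • x‖ ≤ phiKernel r θ s m ‖a • x'‖ :=
      phiKernel_anti hr0 hs0 (norm_nonneg _) h1
    exact lt_of_lt_of_le hx h2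
  have hset : {x | t < f x} = (a⁻¹ • y) +ᵥ K := by
    ext x
    rw [Set.mem_vadd_set_iff_neg_vadd_mem]
    have hxy : a • (-(a⁻¹ • y) +ᵥ x) = a • x - y := by
      rw [vadd_eq_add, smul_add, smul_neg, smul_smul, mul_inv_cancel₀ ha.ne', one_smul]
      abel
    simp only [hK, hf, hg, Set.mem_setOf_eq, hxy]
  rw [hset]
  exact vadd_inter_ball_le K hKdown _
end

section
/- Let s > 1, 0 < α < 1, n ≥ 1, set f_α(u) = |u|^{-1-α}u, fix δ > 0 small and m₁ = ⌈δ^{-1/(1+sα)}⌉. Then there is a constant C depending only on n, s, α such that every point x ∈ [δ, m₁^{-sα}]^n is within distance C·δ of the set f_α({1^s, 2^s, 3^s, …}^n). That is, sup over x ∈ [δ, m₁^{-sα}]^n of dist(x, f_α(ℕ_{≥1}^s)^n) ≤ C·δ. -/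
/-- `f_α(u) = |u|^{-1-α} u`. -/
noncomputable def fAlpha {n : ℕ} (α : ℝ) (x : EuclideanSpace ℝ (Fin n)) :
    EuclideanSpace ℝ (Fin n) :=
  ‖x‖ ^ (-1 - α) • x

/-- The lattice set `{1^s, 2^s, 3^s, …}^n`. -/
def latticeSet (n : ℕ) (s : ℝ) : Set (EuclideanSpace ℝ (Fin n)) :=
  {x | ∀ i, ∃ m : ℕ, 1 ≤ m ∧ x i = (m : ℝ) ^ s}







lemma bern_aux {p : ℝ} (hp : 1 ≤ p) {a b : ℝ} (hb : 0 ≤ b) (hab : b ≤ a) :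
    a ^ p - b ^ p ≤ p * a ^ (p - 1) * (a - b) := by
  rcases eq_or_lt_of_le (hb.trans hab) with h | ha
  · have hb0 : b = 0 := le_antisymm (hab.trans h.symm.le) hb
    subst hb0
    simp [← h]
  · have key : 1 + p * (b / a - 1) ≤ (b / a) ^ p := by
      have := one_add_mul_self_le_rpow_one_add (s := b / a - 1)
        (by have : 0 ≤ b / a := div_nonneg hb ha.le; linarith) hp
      simpa using this
    have hdiv : (b / a) ^ p = b ^ p / a ^ p := Real.div_rpow hb ha.le p
    have hap : 0 < a ^ p := Real.rpow_pos_of_pos ha p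
    rw [hdiv] at key
    have key2 : a ^ p * (1 + p * (b / a - 1)) ≤ b ^ p := by
      calc a ^ p * (1 + p * (b / a - 1)) ≤ a ^ p * (b ^ p / a ^ p) :=
            mul_le_mul_of_nonneg_left key hap.le
        _ = b ^ p := by field_simp
    have hsub : a ^ (p - 1) = a ^ p / a := by
      rw [Real.rpow_sub ha, Real.rpow_one]
    have expand : a ^ p * (1 + p * (b / a - 1)) = a ^ p - p * a ^ (p-1) * (a - b) := by
      rw [hsub]; field_simp; ring
    rw [expand] at key2
    linarith

lemma inv_rpow_diff {p : ℝ} (hp : 1 ≤ p) {a b : ℝ} (ha : 0 < a) (hab : a ≤ b) :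
    a ^ (-p) - b ^ (-p) ≤ p * (b - a) * a ^ (-(p+1)) := by
  have hb : 0 < b := ha.trans_le hab
  have h1 : b ^ p - a ^ p ≤ p * b ^ (p - 1) * (b - a) := bern_aux hp ha.le hab
  have hap : 0 < a ^ p := Real.rpow_pos_of_pos ha p
  have hbp : 0 < b ^ p := Real.rpow_pos_of_pos hb p
  have e1 : a ^ (-p) - b ^ (-p) = (b ^ p - a ^ p) / (a ^ p * b ^ p) := by
    rw [Real.rpow_neg ha.le, Real.rpow_neg hb.le]; field_simp
  have hb1 : b ^ (p - 1) = b ^ p / b := by rw [Real.rpow_sub hb, Real.rpow_one]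
  have e2 : a ^ (-(p+1)) = 1 / a / a ^ p := by
    rw [Real.rpow_neg ha.le, Real.rpow_add ha, Real.rpow_one]; field_simp
  rw [e1, e2]
  calc (b ^ p - a ^ p) / (a ^ p * b ^ p)
      ≤ (p * b ^ (p-1) * (b - a)) / (a ^ p * b ^ p) := by
        gcongr
    _ = p * (b - a) * (1 / b) / a ^ p := by rw [hb1]; field_simp
    _ ≤ p * (b - a) * (1 / a) / a ^ p := by
        have hpb : 0 ≤ p * (b - a) := by nlinarith
        have h2 : 1 / b ≤ 1 / a := one_div_le_one_div_of_le ha hab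
        gcongr
    _ = p * (b - a) * (1 / a / a ^ p) := by ring


lemma coord_abs_le_norm {n : ℕ} (x : EuclideanSpace ℝ (Fin n)) (i : Fin n) : |x i| ≤ ‖x‖ := by
  rw [EuclideanSpace.norm_eq]
  have h1 : |x i| = Real.sqrt (‖x i‖ ^ 2) := by
    rw [Real.sqrt_sq_eq_abs]; simp [Real.norm_eq_abs]
  rw [h1]
  apply Real.sqrt_le_sqrt
  exact Finset.single_le_sum (f := fun j => ‖x j‖ ^ 2) (fun j _ => sq_nonneg _) (Finset.mem_univ i)

lemma norm_le_sqrt_mul {n : ℕ} (x : EuclideanSpace ℝ (Fin n)) {B : ℝ} (hB : 0 ≤ B)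
    (h : ∀ i, |x i| ≤ B) : ‖x‖ ≤ Real.sqrt n * B := by
  rw [EuclideanSpace.norm_eq]
  have : ∑ i, ‖x i‖ ^ 2 ≤ n * B ^ 2 := by
    calc ∑ i, ‖x i‖ ^ 2 ≤ ∑ _i : Fin n, B ^ 2 := by
          apply Finset.sum_le_sum
          intro i _
          have := h i
          rw [Real.norm_eq_abs]
          nlinarith [abs_nonneg (x i)]
      _ = n * B ^ 2 := by simp [Finset.sum_const, nsmul_eq_mul]
  calc Real.sqrt (∑ i, ‖x i‖ ^ 2) ≤ Real.sqrt (n * B ^ 2) := Real.sqrt_le_sqrt this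
    _ = Real.sqrt n * B := by
        rw [Real.sqrt_mul (by positivity), Real.sqrt_sq hB]

lemma pow_gap {s : ℝ} (hs : 1 < s) {t : ℝ} (ht : 1 ≤ t) :
    ∃ m : ℕ, 1 ≤ m ∧ t ≤ (m : ℝ) ^ s ∧ (m : ℝ) ^ s ≤ t + s * 2 ^ (s-1) * t ^ (1 - 1/s) := by
  have ht0 : 0 < t := lt_of_lt_of_le one_pos ht
  have hs0 : 0 < s := lt_trans one_pos hs
  set r := t ^ (1/s) with hr
  have hr1 : 1 ≤ r := Real.one_le_rpow ht (by positivity)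
  have hr0 : 0 < r := lt_of_lt_of_le one_pos hr1
  have hrs : r ^ s = t := by
    rw [hr, ← Real.rpow_mul ht0.le, one_div_mul_cancel hs0.ne', Real.rpow_one]
  have hle : r ≤ (⌈r⌉₊ : ℝ) := Nat.le_ceil r
  have hceil_lt : (⌈r⌉₊ : ℝ) < r + 1 := Nat.ceil_lt_add_one hr0.le
  have hceil2 : (⌈r⌉₊ : ℝ) ≤ 2 * r := by linarith
  have hts : t ≤ (⌈r⌉₊ : ℝ) ^ s := by
    have : r ^ s ≤ (⌈r⌉₊ : ℝ) ^ s := Real.rpow_le_rpow hr0.le hle hs0.le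
    linarith [hrs ▸ this]
  refine ⟨⌈r⌉₊, Nat.one_le_ceil_iff.mpr hr0, hts, ?_⟩
  have hb := bern_aux hs.le hr0.le hle
  rw [hrs] at hb
  have hm1 : (⌈r⌉₊ : ℝ) ^ (s - 1) ≤ (2 * r) ^ (s - 1) :=
    Real.rpow_le_rpow (by positivity) hceil2 (by linarith)
  have h2r : (2 * r) ^ (s - 1) = 2 ^ (s-1) * t ^ (1 - 1/s) := by
    rw [Real.mul_rpow (by norm_num) hr0.le, hr, ← Real.rpow_mul ht0.le]
    congr 2
    field_simp
  have hd1 : (⌈r⌉₊ : ℝ) - r ≤ 1 := by linarith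
  have hstep : (⌈r⌉₊ : ℝ) ^ s - t ≤ s * (2 ^ (s-1) * t ^ (1 - 1/s)) := by
    calc (⌈r⌉₊ : ℝ) ^ s - t ≤ s * (⌈r⌉₊ : ℝ) ^ (s - 1) * ((⌈r⌉₊ : ℝ) - r) := hb
      _ ≤ s * (⌈r⌉₊ : ℝ) ^ (s - 1) * 1 := by
          apply mul_le_mul_of_nonneg_left hd1
          positivity
      _ = s * (⌈r⌉₊ : ℝ) ^ (s - 1) := by ring
      _ ≤ s * ((2 * r) ^ (s - 1)) := mul_le_mul_of_nonneg_left hm1 hs0.le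
      _ = s * (2 ^ (s-1) * t ^ (1 - 1/s)) := by rw [h2r]
  linarith

set_option maxHeartbeats 1600000 in
/-- For `s > 1`, `0 < α < 1`, there are `C > 0` and `δ₀ > 0` so that for all `0 < δ ≤ δ₀`,
setting `m₁ = ⌈δ^{-1/(1+sα)}⌉`, every point of the cube `[δ, m₁^{-sα}]^n` lies within
distance `C·δ` of `f_α({1^s, 2^s, …}^n)`. -/
theorem stmt_16 (n : ℕ) (hn : 1 ≤ n) (s α : ℝ) (hs : 1 < s) (hα0 : 0 < α) (hα1 : α < 1) :
    ∃ C : ℝ, 0 < C ∧ ∃ δ₀ : ℝ, 0 < δ₀ ∧ ∀ δ : ℝ, 0 < δ → δ ≤ δ₀ →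
      ∀ x : EuclideanSpace ℝ (Fin n),
        (∀ i, δ ≤ x i ∧ x i ≤ ((⌈δ ^ (-(1 : ℝ) / (1 + s * α))⌉₊ : ℝ)) ^ (-(s * α))) →
        Metric.infDist x (fAlpha α '' latticeSet n s) ≤ C * δ := by
  have hs0 : (0:ℝ) < s := lt_trans one_pos hs
  have hsα : (0:ℝ) < 1 + s * α := by positivity
  set rn : ℝ := Real.sqrt n with hrn
  have hrn1 : 1 ≤ rn := by
    rw [hrn]
    rw [show (1:ℝ) = Real.sqrt 1 by simp]
    exact Real.sqrt_le_sqrt (by exact_mod_cast hn)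
  have hrn0 : 0 < rn := lt_of_lt_of_le one_pos hrn1
  -- constants
  set K : ℝ := 1 + (1 + α) * rn with hK
  have hK0 : 0 < K := by positivity
  set q : ℝ := (α + 1/s) / α with hq
  have hq0 : 0 < q := by positivity
  set C : ℝ := rn * K * (s * 2 ^ (s - 1)) * rn ^ q with hC
  have hC0 : 0 < C := by positivity
  set A : ℝ := rn ^ ((1 + α) / (α * (s - 1))) with hA
  have hA0 : 0 < A := Real.rpow_pos_of_pos hrn0 _
  set M : ℝ := max 1 A with hM
  have hM1 : 1 ≤ M := le_max_left _ _
  have hM0 : 0 < M := lt_of_lt_of_le one_pos hM1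
  refine ⟨C, hC0, M ^ (-(1 + s*α)), Real.rpow_pos_of_pos hM0 _, ?_⟩
  intro δ hδ0 hδδ₀ x hx
  set m₁ : ℕ := ⌈δ ^ (-(1 : ℝ) / (1 + s * α))⌉₊ with hm₁def
  -- m₁ ≥ M
  have hexp_np : (-(1:ℝ) / (1 + s * α)) ≤ 0 := by
    apply div_nonpos_of_nonpos_of_nonneg <;> linarith
  have hδM : M ≤ δ ^ (-(1:ℝ) / (1 + s * α)) := by
    have h1 : (M ^ (-(1 + s*α))) ^ (-(1:ℝ) / (1 + s * α)) = M := by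
      rw [← Real.rpow_mul hM0.le]
      rw [show (-(1 + s*α)) * (-(1:ℝ) / (1 + s * α)) = 1 by field_simp]
      exact Real.rpow_one M
    calc M = (M ^ (-(1 + s*α))) ^ (-(1:ℝ) / (1 + s * α)) := h1.symm
      _ ≤ δ ^ (-(1:ℝ) / (1 + s * α)) :=
        Real.rpow_le_rpow_of_nonpos hδ0 hδδ₀ hexp_np
  have hm₁M : M ≤ (m₁ : ℝ) := le_trans hδM (Nat.le_ceil _)
  have hm₁0 : (0:ℝ) < (m₁ : ℝ) := lt_of_lt_of_le hM0 hm₁M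
  -- δ ≥ m₁ ^ (-(1+sα))
  have hδe0 : (0:ℝ) < δ ^ (-(1:ℝ) / (1 + s * α)) := Real.rpow_pos_of_pos hδ0 _
  have hδlow : (m₁ : ℝ) ^ (-(1 + s*α)) ≤ δ := by
    have h1 : (m₁ : ℝ) ^ (-(1 + s*α)) ≤ (δ ^ (-(1:ℝ) / (1 + s * α))) ^ (-(1 + s*α)) :=
      Real.rpow_le_rpow_of_nonpos hδe0 (Nat.le_ceil _) (by linarith)
    calc (m₁ : ℝ) ^ (-(1 + s*α)) ≤ (δ ^ (-(1:ℝ) / (1 + s * α))) ^ (-(1 + s*α)) := h1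
      _ = δ := by
        rw [← Real.rpow_mul hδ0.le]
        rw [show (-(1:ℝ) / (1 + s * α)) * (-(1 + s*α)) = 1 by field_simp]
        exact Real.rpow_one δ
  -- basic x facts
  have hx_pos : ∀ i, 0 < x i := fun i => lt_of_lt_of_le hδ0 (hx i).1
  have hx_ub : ∀ i, x i ≤ (m₁ : ℝ) ^ (-(s * α)) := fun i => (hx i).2
  have hN0 : 0 < ‖x‖ := by
    rw [norm_pos_iff]
    intro h
    have := hx_pos ⟨0, hn⟩
    rw [h] at this
    simp at this
  have hNle : ‖x‖ ≤ rn * (m₁ : ℝ) ^ (-(s * α)) := by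
    apply norm_le_sqrt_mul x (Real.rpow_nonneg hm₁0.le _)
    intro i
    rw [abs_of_pos (hx_pos i)]
    exact hx_ub i
  -- the preimage point u
  set e : ℝ := -(1 + α) / α with he
  have he_neg : e < 0 := by
    rw [he]; apply div_neg_of_neg_of_pos (by linarith) hα0
  set u : EuclideanSpace ℝ (Fin n) := (‖x‖ ^ e) • x with hu
  have hu_coord : ∀ i, u i = ‖x‖ ^ e * x i := by
    intro i
    simp [hu, PiLp.smul_apply, smul_eq_mul]
  have hu_pos : ∀ i, 0 < u i := by
    intro i; rw [hu_coord i]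
    exact mul_pos (Real.rpow_pos_of_pos hN0 e) (hx_pos i)
  have hu_norm : ‖u‖ = ‖x‖ ^ (-1/α) := by
    rw [hu, norm_smul, Real.norm_eq_abs, abs_of_pos (Real.rpow_pos_of_pos hN0 e)]
    calc ‖x‖ ^ e * ‖x‖ = ‖x‖ ^ (e + 1) := by rw [Real.rpow_add hN0, Real.rpow_one]
      _ = ‖x‖ ^ (-1/α) := by
        congr 1
        rw [he]
        field_simp
        ring
  have hU0 : 0 < ‖u‖ := by rw [hu_norm]; exact Real.rpow_pos_of_pos hN0 _
  -- x is the image of u, coordinatewise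
  have hxu : ∀ i, x i = ‖u‖ ^ (-(1+α)) * u i := by
    intro i
    have hae : (-1/α) * (-(1+α)) + e = 0 := by rw [he]; field_simp; ring
    have : ‖u‖ ^ (-(1+α)) * u i = x i := by
      calc ‖u‖ ^ (-(1+α)) * u i
          = ‖x‖ ^ ((-1/α) * (-(1+α))) * (‖x‖ ^ e * x i) := by
            rw [hu_norm, hu_coord, ← Real.rpow_mul hN0.le]
        _ = ‖x‖ ^ ((-1/α) * (-(1+α)) + e) * x i := by
            rw [Real.rpow_add hN0]; ring
        _ = x i := by rw [hae, Real.rpow_zero, one_mul]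
    exact this.symm
  -- lower bound on u coordinates
  have hu_lb : ∀ i, 1 ≤ u i := by
    have hB0 : 0 < rn * (m₁ : ℝ) ^ (-(s * α)) := by positivity
    have h1 : (rn * (m₁:ℝ) ^ (-(s*α))) ^ e ≤ ‖x‖ ^ e :=
      Real.rpow_le_rpow_of_nonpos hN0 hNle he_neg.le
    have h2 : (rn * (m₁:ℝ) ^ (-(s*α))) ^ e = rn ^ e * (m₁:ℝ) ^ (s * (1+α)) := by
      rw [Real.mul_rpow hrn0.le (Real.rpow_nonneg hm₁0.le _),
        ← Real.rpow_mul hm₁0.le]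
      congr 2
      rw [he]
      field_simp
    have hA_le : A ≤ (m₁:ℝ) := le_trans (le_max_right 1 A) hm₁M
    have h4 : rn ^ ((1+α)/α) ≤ (m₁:ℝ) ^ (s-1) := by
      have hα' : α ≠ 0 := ne_of_gt hα0
      have hs1' : s - 1 ≠ 0 := by linarith
      calc rn ^ ((1+α)/α) = A ^ (s-1) := by
            rw [hA, ← Real.rpow_mul hrn0.le]
            congr 1
            field_simp
          _ ≤ (m₁:ℝ) ^ (s-1) := Real.rpow_le_rpow hA0.le hA_le (by linarith)
    have h5 : (m₁:ℝ) ^ (s*(1+α)) * (m₁:ℝ) ^ (-(1+s*α)) = (m₁:ℝ) ^ (s-1) := by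
      rw [← Real.rpow_add hm₁0]
      congr 1
      ring
    have h6 : rn ^ e * rn ^ ((1+α)/α) = 1 := by
      rw [← Real.rpow_add hrn0]
      rw [show e + (1+α)/α = 0 by rw [he]; field_simp; ring]
      exact Real.rpow_zero rn
    have hrne : 0 < rn ^ e := Real.rpow_pos_of_pos hrn0 e
    intro i
    rw [hu_coord i]
    calc (1:ℝ) = rn ^ e * rn ^ ((1+α)/α) := h6.symm
      _ ≤ rn ^ e * (m₁:ℝ) ^ (s-1) := by
          exact mul_le_mul_of_nonneg_left h4 hrne.le
      _ = rn ^ e * ((m₁:ℝ) ^ (s*(1+α)) * (m₁:ℝ) ^ (-(1+s*α))) := by rw [h5]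
      _ ≤ rn ^ e * ((m₁:ℝ) ^ (s*(1+α)) * δ) := by
          apply mul_le_mul_of_nonneg_left _ hrne.le
          exact mul_le_mul_of_nonneg_left hδlow (Real.rpow_nonneg hm₁0.le _)
      _ = (rn ^ e * (m₁:ℝ) ^ (s * (1+α))) * δ := by ring
      _ = (rn * (m₁:ℝ) ^ (-(s*α))) ^ e * δ := by rw [h2]
      _ ≤ ‖x‖ ^ e * δ := mul_le_mul_of_nonneg_right h1 hδ0.le
      _ ≤ ‖x‖ ^ e * x i :=
          mul_le_mul_of_nonneg_left (hx i).1 (Real.rpow_pos_of_pos hN0 e).le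
  have hu_le_norm : ∀ i, u i ≤ ‖u‖ := fun i =>
    le_trans (le_abs_self _) (coord_abs_le_norm u i)
  -- the gap bound
  set Δ : ℝ := s * 2 ^ (s - 1) * ‖u‖ ^ (1 - 1/s) with hΔ
  have hΔ0 : 0 < Δ := by positivity
  -- choose the lattice point
  have hgap : ∀ i, ∃ m : ℕ, 1 ≤ m ∧ u i ≤ (m : ℝ) ^ s ∧ (m : ℝ) ^ s ≤ u i + Δ := by
    intro i
    obtain ⟨m, hm1, hm2, hm3⟩ := pow_gap hs (hu_lb i)
    refine ⟨m, hm1, hm2, le_trans hm3 ?_⟩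
    have h1 : (u i) ^ (1 - 1/s) ≤ ‖u‖ ^ (1 - 1/s) := by
      apply Real.rpow_le_rpow (hu_pos i).le (hu_le_norm i)
      have : 1/s < 1 := by
        rw [div_lt_one hs0]; exact hs
      linarith
    have h2 : s * 2 ^ (s-1) * (u i) ^ (1 - 1/s) ≤ Δ := by
      rw [hΔ]
      apply mul_le_mul_of_nonneg_left h1 (by positivity)
    linarith
  choose mf hmf1 hmf2 hmf3 using hgap
  set v : EuclideanSpace ℝ (Fin n) := (WithLp.equiv 2 _).symm (fun i => ((mf i : ℝ)) ^ s) with hv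
  have hv_coord : ∀ i, v i = ((mf i : ℝ)) ^ s := by intro i; rfl
  have hv_mem : v ∈ latticeSet n s := fun i => ⟨mf i, hmf1 i, hv_coord i⟩
  have hv_ge : ∀ i, u i ≤ v i := by intro i; rw [hv_coord]; exact hmf2 i
  have hv_le : ∀ i, v i ≤ u i + Δ := by intro i; rw [hv_coord]; exact hmf3 i
  have hV_ge : ‖u‖ ≤ ‖v‖ := by
    rw [EuclideanSpace.norm_eq, EuclideanSpace.norm_eq]
    apply Real.sqrt_le_sqrt
    apply Finset.sum_le_sum
    intro i _
    have h1 : 0 < u i := hu_pos i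
    have h2 : u i ≤ v i := hv_ge i
    rw [Real.norm_eq_abs, Real.norm_eq_abs, abs_of_pos h1,
      abs_of_pos (lt_of_lt_of_le h1 h2)]
    nlinarith
  have hV0 : 0 < ‖v‖ := lt_of_lt_of_le hU0 hV_ge
  have hvu : ‖v - u‖ ≤ rn * Δ := by
    apply norm_le_sqrt_mul _ hΔ0.le
    intro i
    have : (v - u) i = v i - u i := rfl
    rw [this, abs_le]
    constructor
    · linarith [hv_ge i, hΔ0]
    · linarith [hv_le i]
  have hVU : ‖v‖ - ‖u‖ ≤ rn * Δ := le_trans (norm_sub_norm_le v u) hvu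
  -- coordinatewise estimate
  have hp1 : (1:ℝ) ≤ 1 + α := by linarith
  have hcoord : ∀ i, |x i - fAlpha α v i| ≤ K * Δ * ‖u‖ ^ (-(1+α)) := by
    intro i
    have hfv : fAlpha α v i = ‖v‖ ^ (-(1+α)) * v i := by
      have h : (-1 - α : ℝ) = -(1+α) := by ring
      simp [fAlpha, h, PiLp.smul_apply, smul_eq_mul]
    have hdiff := inv_rpow_diff hp1 hU0 hV_ge
    have hba : ‖v‖ ^ (-(1+α)) ≤ ‖u‖ ^ (-(1+α)) :=
      Real.rpow_le_rpow_of_nonpos hU0 hV_ge (by linarith)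
    have hab_nonneg : 0 ≤ ‖u‖ ^ (-(1+α)) - ‖v‖ ^ (-(1+α)) := by linarith
    have hmul : ‖u‖ * ‖u‖ ^ (-((1+α)+1)) = ‖u‖ ^ (-(1+α)) := by
      nth_rewrite 1 [← Real.rpow_one ‖u‖]
      rw [← Real.rpow_add hU0]
      congr 1
      ring
    have hX : |u i * (‖u‖ ^ (-(1+α)) - ‖v‖ ^ (-(1+α)))| ≤
        (1+α) * rn * Δ * ‖u‖ ^ (-(1+α)) := by
      rw [abs_of_nonneg (mul_nonneg (hu_pos i).le hab_nonneg)]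
      calc u i * (‖u‖ ^ (-(1+α)) - ‖v‖ ^ (-(1+α)))
          ≤ ‖u‖ * ((1+α) * (‖v‖ - ‖u‖) * ‖u‖ ^ (-((1+α)+1))) :=
            mul_le_mul (hu_le_norm i) hdiff hab_nonneg hU0.le
        _ ≤ ‖u‖ * ((1+α) * (rn * Δ) * ‖u‖ ^ (-((1+α)+1))) := by
            have h1 : (0:ℝ) < ‖u‖ ^ (-((1+α)+1)) := Real.rpow_pos_of_pos hU0 _
            have h2 : (1+α) * (‖v‖ - ‖u‖) ≤ (1+α) * (rn * Δ) :=
              mul_le_mul_of_nonneg_left hVU (by linarith)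
            exact mul_le_mul_of_nonneg_left
              (mul_le_mul_of_nonneg_right h2 h1.le) hU0.le
        _ = (1+α) * rn * Δ * (‖u‖ * ‖u‖ ^ (-((1+α)+1))) := by ring
        _ = (1+α) * rn * Δ * ‖u‖ ^ (-(1+α)) := by rw [hmul]
    have hY : |‖v‖ ^ (-(1+α)) * (u i - v i)| ≤ Δ * ‖u‖ ^ (-(1+α)) := by
      rw [abs_mul, abs_of_pos (Real.rpow_pos_of_pos hV0 _)]
      have habs : |u i - v i| ≤ Δ := by
        rw [abs_le]
        constructor
        · linarith [hv_le i]
        · linarith [hv_ge i, hΔ0]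
      calc ‖v‖ ^ (-(1+α)) * |u i - v i| ≤ ‖u‖ ^ (-(1+α)) * Δ :=
            mul_le_mul hba habs (abs_nonneg _) (Real.rpow_nonneg hU0.le _)
        _ = Δ * ‖u‖ ^ (-(1+α)) := mul_comm _ _
    have hrepr : x i - fAlpha α v i =
        u i * (‖u‖ ^ (-(1+α)) - ‖v‖ ^ (-(1+α))) + ‖v‖ ^ (-(1+α)) * (u i - v i) := by
      rw [hxu i, hfv]
      ring
    rw [hrepr]
    have hKeq : K * Δ * ‖u‖ ^ (-(1+α)) =
        (1+α) * rn * Δ * ‖u‖ ^ (-(1+α)) + Δ * ‖u‖ ^ (-(1+α)) := by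
      rw [hK]; ring
    calc |u i * (‖u‖ ^ (-(1+α)) - ‖v‖ ^ (-(1+α))) + ‖v‖ ^ (-(1+α)) * (u i - v i)|
        ≤ |u i * (‖u‖ ^ (-(1+α)) - ‖v‖ ^ (-(1+α)))| +
          |‖v‖ ^ (-(1+α)) * (u i - v i)| := abs_add_le _ _
      _ ≤ (1+α) * rn * Δ * ‖u‖ ^ (-(1+α)) + Δ * ‖u‖ ^ (-(1+α)) := add_le_add hX hY
      _ = K * Δ * ‖u‖ ^ (-(1+α)) := hKeq.symm
  -- total estimate
  have htotal : ‖x - fAlpha α v‖ ≤ rn * (K * Δ * ‖u‖ ^ (-(1+α))) := by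
    apply norm_le_sqrt_mul
    · positivity
    · intro i
      have : (x - fAlpha α v) i = x i - fAlpha α v i := rfl
      rw [this]
      exact hcoord i
  -- final bound
  have hfinal : rn * (K * Δ * ‖u‖ ^ (-(1+α))) ≤ C * δ := by
    have hα' : α ≠ 0 := ne_of_gt hα0
    have hs' : s ≠ 0 := ne_of_gt hs0
    have hexp1 : Δ * ‖u‖ ^ (-(1+α)) = s * 2 ^ (s-1) * ‖u‖ ^ (-(α + 1/s)) := by
      rw [hΔ, mul_assoc, ← Real.rpow_add hU0]
      congr 2
      ring
    have hB0 : (0:ℝ) < rn * (m₁ : ℝ) ^ (-(s * α)) := by positivity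
    have hulow : (rn * (m₁:ℝ) ^ (-(s*α))) ^ (-1/α) ≤ ‖u‖ := by
      rw [hu_norm]
      exact Real.rpow_le_rpow_of_nonpos hN0 hNle
        (by apply div_nonpos_of_nonpos_of_nonneg <;> linarith)
    have hupos2 : (0:ℝ) < (rn * (m₁:ℝ) ^ (-(s*α))) ^ (-1/α) :=
      Real.rpow_pos_of_pos hB0 _
    have hα1s : (0:ℝ) < α + 1/s := by positivity
    have h7 : ‖u‖ ^ (-(α + 1/s)) ≤
        ((rn * (m₁:ℝ) ^ (-(s*α))) ^ (-1/α)) ^ (-(α + 1/s)) :=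
      Real.rpow_le_rpow_of_nonpos hupos2 hulow (by linarith)
    have hE : (-1/α) * (-(α + 1/s)) = q := by
      rw [hq, neg_div, neg_mul_neg, one_div_mul_eq_div]
    have h8 : ((rn * (m₁:ℝ) ^ (-(s*α))) ^ (-1/α)) ^ (-(α + 1/s)) =
        rn ^ q * (m₁:ℝ) ^ (-(1 + s*α)) := by
      rw [← Real.rpow_mul hB0.le, hE,
        Real.mul_rpow hrn0.le (Real.rpow_nonneg hm₁0.le _),
        ← Real.rpow_mul hm₁0.le]
      congr 2
      rw [hq]
      field_simp
      ring
    have h9 : ‖u‖ ^ (-(α + 1/s)) ≤ rn ^ q * δ := by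
      calc ‖u‖ ^ (-(α + 1/s)) ≤ rn ^ q * (m₁:ℝ) ^ (-(1 + s*α)) := by
            rw [← h8]; exact h7
        _ ≤ rn ^ q * δ :=
            mul_le_mul_of_nonneg_left hδlow (Real.rpow_nonneg hrn0.le _)
    calc rn * (K * Δ * ‖u‖ ^ (-(1+α)))
        = rn * K * (s * 2 ^ (s-1)) * ‖u‖ ^ (-(α + 1/s)) := by
          rw [mul_assoc K, hexp1]; ring
      _ ≤ rn * K * (s * 2 ^ (s-1)) * (rn ^ q * δ) := by
          apply mul_le_mul_of_nonneg_left h9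
          positivity
      _ = C * δ := by rw [hC]; ring
  calc Metric.infDist x (fAlpha α '' latticeSet n s) ≤ dist x (fAlpha α v) :=
        Metric.infDist_le_dist_of_mem ⟨v, hv_mem, rfl⟩
    _ = ‖x - fAlpha α v‖ := by rw [dist_eq_norm]
    _ ≤ rn * (K * Δ * ‖u‖ ^ (-(1+α))) := htotal
    _ ≤ C * δ := hfinal
end
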